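/- Let (X_n, ∂_i) be a simplicial set satisfying the simplicial identity ∂_i ∂_j = ∂_j ∂_{i+1} for all j ≤ i, and let ∂ = Σ_{i=0}^{n} q^i ∂_i on the free ℤ[q]-module generated in degree n. Then for 0 ≤ k ≤ N, the iterated border map satisfies ∂^k = [k]_q! · Σ_{i_1 ≤ ... ≤ i_k} q^{i_1 + ... + i_k} ∂_{i_k} ··· ∂_{i_1}. -/
import Mathlib

noncomputable section

attribute [local instance] Classical.propDecidable

/-- The q-integer `[k]_q = 1 + q + ... + q^(k-1)`. -/
def qInt (q : ℂ) (k : ℕ) : ℂ := ∑ i ∈ Finset.range k, q ^ i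

/-- The q-factorial `[k]_q! = [1]_q [2]_q ⋯ [k]_q`. -/
def qFac (q : ℂ) (k : ℕ) : ℂ := ∏ i ∈ Finset.range k, qInt q (i + 1)

/-- The module of chains (over `ℂ ⊇ ℤ[q]`) on a simplicial set `S`. -/
abbrev ChainsS (S : ℕ → Type) : Type := (Σ n : ℕ, S n) →₀ ℂ

/-- The q-analog border map `∂ = ∑_{i=0}^{n} qⁱ ∂ᵢ` on the chains of a simplicial set. -/
def qBorderS (q : ℂ) (S : ℕ → Type) (d : ∀ n : ℕ, Fin (n + 2) → S (n + 1) → S n) :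
    ChainsS S →ₗ[ℂ] ChainsS S :=
  Finsupp.lsum ℂ fun s =>
    match s with
    | ⟨0, _⟩ => 0
    | ⟨n + 1, x⟩ => ∑ i : Fin (n + 2),
        q ^ (i : ℕ) • Finsupp.lsingle (⟨n, d n i x⟩ : Σ n : ℕ, S n)

/-- A single face map with the index given as a natural number (junk value out of range). -/
def dNat (S : ℕ → Type) (d : ∀ n : ℕ, Fin (n + 2) → S (n + 1) → S n) (n : ℕ) (i : ℕ) :
    S (n + 1) → S n :=
  if h : i < n + 2 then d n ⟨i, h⟩ else d n 0

/-- The iterated face map `∂_{f 0} ∂_{f 1} ⋯ ∂_{f (k-1)} : S (m+k) → S m`,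
where `∂_{f (k-1)}` is applied first. -/
def dIter (S : ℕ → Type) (d : ∀ n : ℕ, Fin (n + 2) → S (n + 1) → S n) (m : ℕ) :
    ∀ k : ℕ, (ℕ → ℕ) → S (m + k) → S m
  | 0, _, x => x
  | k + 1, f, x => dIter S d m k f (dNat S d (m + k) (f k) x)

namespace QAux

/-! ### Combinatorial helpers -/

/-- Least `u` such that `u = k` or `j > f u + (k - 1 - u)` (valid when that condition is
upward closed in `u`, e.g. when `f` is antitone on `[0,k)`). -/
def rIdx : ℕ → (ℕ → ℕ) → ℕ → ℕ
  | 0, _, _ => 0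
  | k + 1, f, j => if f k < j then rIdx k f (j - 1) else k + 1

/-- Insert value `v` at position `r`, shifting the rest of `f` to the right. -/
def insF (f : ℕ → ℕ) (r v : ℕ) (u : ℕ) : ℕ :=
  if u < r then f u else if u = r then v else f (u - 1)

lemma rIdx_le (k : ℕ) (f : ℕ → ℕ) : ∀ j, rIdx k f j ≤ k := by
  induction k with
  | zero => intro j; simp [rIdx]
  | succ k ih =>
    intro j
    unfold rIdx
    split
    · exact (ih _).trans (Nat.le_succ k)
    · exact le_rfl

lemma rIdx_spec1 (k : ℕ) (f : ℕ → ℕ) : ∀ j, rIdx k f j < k →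
    f (rIdx k f j) + (k - 1 - rIdx k f j) < j := by
  induction k with
  | zero => intro j h; omega
  | succ k ih =>
    intro j
    unfold rIdx
    split
    · intro h
      rcases Nat.lt_or_ge (rIdx k f (j-1)) k with h' | h'
      · have := ih (j-1) h'
        have hle := rIdx_le k f (j-1)
        omega
      · have := rIdx_le k f (j-1)
        have hr : rIdx k f (j-1) = k := le_antisymm this h'
        rw [hr]
        omega
    · omega

lemma rIdx_spec2 (k : ℕ) (f : ℕ → ℕ) : ∀ j, 0 < rIdx k f j →
    j ≤ f (rIdx k f j - 1) + (k - rIdx k f j) := by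
  induction k with
  | zero => intro j h; simp [rIdx] at h
  | succ k ih =>
    intro j
    unfold rIdx
    split
    · intro h
      have := ih (j-1) h
      have hle := rIdx_le k f (j-1)
      omega
    · intro _
      simp only [Nat.add_sub_cancel]
      omega

lemma rIdx_eq (k : ℕ) (f : ℕ → ℕ) : ∀ j r, (∀ a b : ℕ, a ≤ b → b < k → f b ≤ f a) →
    r ≤ k → (r < k → f r + (k - 1 - r) < j) → (0 < r → j ≤ f (r - 1) + (k - r)) →
    rIdx k f j = r := by
  induction k with
  | zero => intro j r _ hr _ _; simp [rIdx]; omega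
  | succ k ih =>
    intro j r hf hr h1 h2
    unfold rIdx
    split
    · rename_i hfk
      have hrk : r ≤ k := by
        by_contra hc
        have hr' : r = k + 1 := by omega
        have := h2 (by omega)
        rw [hr'] at this
        simp at this
        omega
      apply ih (j-1) r (fun a b hab hb => hf a b hab (by omega)) hrk
      · intro hrk'
        have := h1 (by omega)
        omega
      · intro hr0
        have := h2 hr0
        omega
    · rename_i hfk
      push_neg at hfk
      by_contra hc
      have hrk : r ≤ k := by omega
      have hrk2 : r < k + 1 := by omega
      have := h1 hrk2
      have hfr : f k ≤ f r := hf r k hrk (by omega)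
      omega

lemma anti_adj (K : ℕ) (h : ℕ → ℕ) (H : ∀ u, u + 1 < K → h (u + 1) ≤ h u) :
    ∀ a b, a ≤ b → b < K → h b ≤ h a := by
  intro a b hab
  induction hab with
  | refl => intro _; exact le_rfl
  | @step b' hab ih =>
    intro hb
    exact (H b' hb).trans (ih (by omega))

lemma insF_sum (f : ℕ → ℕ) (v : ℕ) : ∀ K r, r ≤ K →
    ∑ u ∈ Finset.range (K + 1), insF f r v u = v + ∑ u ∈ Finset.range K, f u := by
  intro K
  induction K with
  | zero =>
    intro r hr
    interval_cases r
    simp [insF]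
  | succ K ih =>
    intro r hr
    rw [Finset.sum_range_succ]
    rcases Nat.lt_or_ge r (K + 1) with h | h
    · rw [ih r (by omega)]
      have : insF f r v (K + 1) = f K := by
        unfold insF
        rw [if_neg (by omega), if_neg (by omega)]
        norm_num
      rw [this, Finset.sum_range_succ]
      ring
    · have hr' : r = K + 1 := by omega
      subst hr'
      have : insF f (K+1) v (K+1) = v := by unfold insF; rw [if_neg (by omega), if_pos rfl]
      rw [this]
      have hcong : ∑ u ∈ Finset.range (K + 1), insF f (K+1) v u
          = ∑ u ∈ Finset.range (K + 1), f u := by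
        apply Finset.sum_congr rfl
        intro u hu
        simp only [Finset.mem_range] at hu
        unfold insF
        rw [if_pos (by omega)]
      rw [hcong]
      ring

/-! ### Simplicial helpers -/

/-- Turn a `Fin`-tuple into a `ℕ`-function (with junk value `0`). -/
def toN {k m : ℕ} (f : Fin k → Fin (m + 2)) : ℕ → ℕ :=
  fun t => if h : t < k then (f ⟨t, h⟩ : ℕ) else 0

lemma toN_lt {k m : ℕ} (f : Fin k → Fin (m + 2)) : ∀ u, u < k → toN f u ≤ m + 1 := by
  intro u hu
  unfold toN
  rw [dif_pos hu]
  exact Nat.lt_succ_iff.mp (f ⟨u, hu⟩).isLt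

lemma toN_anti {k m : ℕ} (f : Fin k → Fin (m + 2))
    (hf : ∀ t s : Fin k, t ≤ s → f s ≤ f t) :
    ∀ a b : ℕ, a ≤ b → b < k → toN f b ≤ toN f a := by
  intro a b hab hb
  unfold toN
  rw [dif_pos hb, dif_pos (lt_of_le_of_lt hab hb)]
  exact hf ⟨a, lt_of_le_of_lt hab hb⟩ ⟨b, hb⟩ hab

section
variable (S : ℕ → Type) (d : ∀ n : ℕ, Fin (n + 2) → S (n + 1) → S n)
variable (hd : ∀ (n : ℕ) (i j : Fin (n + 2)), (j : ℕ) ≤ (i : ℕ) →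
      ∀ x : S (n + 2), d n i (d (n + 1) j.castSucc x) = d n j (d (n + 1) i.succ x))

lemma dIter_congr (m : ℕ) : ∀ (k : ℕ) (f f' : ℕ → ℕ), (∀ u, u < k → f u = f' u) →
    ∀ x : S (m + k), dIter S d m k f x = dIter S d m k f' x := by
  intro k
  induction k with
  | zero => intro f f' _ x; rfl
  | succ k ih =>
    intro f f' h x
    show dIter S d m k f (dNat S d (m + k) (f k) x) = dIter S d m k f' (dNat S d (m + k) (f' k) x)
    rw [h k (by omega)]
    exact ih f f' (fun u hu => h u (by omega)) _

include hd in
lemma dNat_swap (n a b : ℕ) (hab : a < b) (hb : b ≤ n + 2) (x : S (n + 2)) :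
    dNat S d n a (dNat S d (n + 1) b x) = dNat S d n (b - 1) (dNat S d (n + 1) a x) := by
  have ha2 : a < n + 2 := by omega
  have ha3 : a < n + 3 := by omega
  have hb1 : b - 1 < n + 2 := by omega
  have hb3 : b < n + 3 := by omega
  unfold dNat
  rw [dif_pos ha2, dif_pos hb3, dif_pos hb1, dif_pos ha3]
  have key := hd n ⟨b - 1, hb1⟩ ⟨a, ha2⟩ (by simp; omega) x
  have h1 : (Fin.castSucc ⟨a, ha2⟩ : Fin (n + 3)) = ⟨a, ha3⟩ := rfl
  have h2 : (Fin.succ ⟨b - 1, hb1⟩ : Fin (n + 3)) = ⟨b, hb3⟩ := by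
    simp [Fin.succ]; omega
  rw [h1, h2] at key
  exact key.symm

include hd in
lemma dIter_swap (m : ℕ) : ∀ (k : ℕ) (f : ℕ → ℕ) (j : ℕ) (x : S (m + k + 1)),
    (∀ a b : ℕ, a ≤ b → b < k → f b ≤ f a) → (∀ u, u < k → f u ≤ m + 1) → j ≤ m + k + 1 →
    dIter S d m k f (dNat S d (m + k) j x) =
      dIter S d m (k + 1) (insF f (rIdx k f j) (j - (k - rIdx k f j))) x := by
  intro k
  induction k with
  | zero =>
    intro f j x _ _ hj
    show dNat S d m j x = dNat S d m (insF f 0 j 0) x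
    have : insF f 0 j 0 = j := by unfold insF; simp
    rw [this]
  | succ k ih =>
    intro f j x hf hfb hj
    show dIter S d m (k + 1) f (dNat S d (m + (k + 1)) j x) = _
    rcases Nat.lt_or_ge (f k) j with hlt | hge
    · -- swap the innermost two face maps
      have hrle := rIdx_le k f (j - 1)
      have hr : rIdx (k + 1) f j = rIdx k f (j - 1) := by
        simp only [rIdx]; rw [if_pos hlt]
      have harg : j - (k + 1 - rIdx k f (j - 1)) = j - 1 - (k - rIdx k f (j - 1)) := by omega
      have hG : insF f (rIdx (k + 1) f j) (j - (k + 1 - rIdx (k + 1) f j))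
          = insF f (rIdx k f (j - 1)) (j - 1 - (k - rIdx k f (j - 1))) := by
        rw [hr, harg]
      rw [hG]
      show dIter S d m k f (dNat S d (m + k) (f k) (dNat S d (m + k + 1) j x))
        = dIter S d m (k + 1) (insF f (rIdx k f (j - 1)) (j - 1 - (k - rIdx k f (j - 1))))
            (dNat S d (m + (k + 1))
              (insF f (rIdx k f (j - 1)) (j - 1 - (k - rIdx k f (j - 1))) (k + 1)) x)
      have hins : insF f (rIdx k f (j - 1)) (j - 1 - (k - rIdx k f (j - 1))) (k + 1) = f k := by
        unfold insF
        rw [if_neg (by omega), if_neg (by omega)]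
        norm_num
      rw [hins]
      rw [dNat_swap S d hd (m + k) (f k) j hlt (by omega) x]
      exact ih f (j - 1) (dNat S d (m + k + 1) (f k) x)
        (fun a b hab hb => hf a b hab (by omega)) (fun u hu => hfb u (by omega)) (by omega)
    · -- the new face map goes to the very bottom
      have hr : rIdx (k + 1) f j = k + 1 := by
        simp only [rIdx]; rw [if_neg (by omega)]
      rw [hr]
      simp only [Nat.sub_self, Nat.sub_zero]
      show _ = dIter S d m (k + 1) (insF f (k + 1) (j - 0))
        (dNat S d (m + (k + 1)) (insF f (k + 1) (j - 0) (k + 1)) x)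
      have h1 : insF f (k + 1) (j - 0) (k + 1) = j := by
        unfold insF; rw [if_neg (by omega), if_pos rfl]; omega
      rw [h1]
      apply dIter_congr
      intro u hu
      unfold insF
      rw [if_pos (by omega)]

end

/-! ### The insertion data -/

/-- Delete the value of `g` at position `r`. -/
def psiF {m k : ℕ} (g : Fin (k + 1) → Fin (m + 2)) (r : Fin (k + 1)) : Fin k → Fin (m + 2) :=
  fun s => if (s : ℕ) < (r : ℕ) then g s.castSucc else g s.succ

/-- The `Fin`-valued version of the insertion `insF`. -/
def phiG {m k : ℕ} (j : ℕ) (f : Fin k → Fin (m + 2)) : Fin (k + 1) → Fin (m + 2) :=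
  fun u => if h : insF (toN f) (rIdx k (toN f) j) (j - (k - rIdx k (toN f) j)) u < m + 2
    then ⟨_, h⟩ else 0

lemma psiF_anti {m k : ℕ} (g : Fin (k + 1) → Fin (m + 2))
    (hg : ∀ t s : Fin (k + 1), t ≤ s → g s ≤ g t) (r : Fin (k + 1)) :
    ∀ t s : Fin k, t ≤ s → psiF g r s ≤ psiF g r t := by
  intro t s hts
  have hts' : (t : ℕ) ≤ (s : ℕ) := hts
  unfold psiF
  by_cases hs : (s : ℕ) < (r : ℕ) <;> by_cases ht : (t : ℕ) < (r : ℕ)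
  · rw [if_pos hs, if_pos ht]
    exact hg t.castSucc s.castSucc (by rw [Fin.le_def]; simp only [Fin.coe_castSucc]; omega)
  · omega
  · rw [if_neg hs, if_pos ht]
    exact hg t.castSucc s.succ (by rw [Fin.le_def]; simp only [Fin.coe_castSucc, Fin.val_succ]; omega)
  · rw [if_neg hs, if_neg ht]
    exact hg t.succ s.succ (by rw [Fin.le_def]; simp only [Fin.val_succ]; omega)

lemma phi_facts {m k : ℕ} (f : Fin k → Fin (m + 2))
    (hf : ∀ t s : Fin k, t ≤ s → f s ≤ f t) (j : ℕ) (hj : j ≤ m + k + 1) :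
    (∀ u, u < k + 1 → insF (toN f) (rIdx k (toN f) j) (j - (k - rIdx k (toN f) j)) u ≤ m + 1)
    ∧ (∀ a b : ℕ, a ≤ b → b < k + 1 →
        insF (toN f) (rIdx k (toN f) j) (j - (k - rIdx k (toN f) j)) b
          ≤ insF (toN f) (rIdx k (toN f) j) (j - (k - rIdx k (toN f) j)) a)
    ∧ (j - (k - rIdx k (toN f) j)) + (k - rIdx k (toN f) j) = j := by
  set fN := toN f with hfN
  set r := rIdx k fN j with hrdef
  have hrle : r ≤ k := rIdx_le k fN j
  have hanti : ∀ a b : ℕ, a ≤ b → b < k → fN b ≤ fN a := toN_anti f hf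
  have hbound : ∀ u, u < k → fN u ≤ m + 1 := toN_lt f
  have hs1 : r < k → fN r + (k - 1 - r) < j := rIdx_spec1 k fN j
  have hs2 : 0 < r → j ≤ fN (r - 1) + (k - r) := rIdx_spec2 k fN j
  refine ⟨?_, ?_, ?_⟩
  · -- bound
    intro u hu
    unfold insF
    rcases Nat.lt_trichotomy u r with h | h | h
    · rw [if_pos h]
      exact hbound u (by omega)
    · rw [if_neg (by omega), if_pos h]
      rcases Nat.eq_zero_or_pos r with h0 | h0
      · omega
      · have := hs2 h0
        have := hbound (r - 1) (by omega)
        omega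
    · rw [if_neg (by omega), if_neg (by omega)]
      exact hbound (u - 1) (by omega)
  · -- antitone
    apply anti_adj
    intro u hu
    unfold insF
    rcases Nat.lt_trichotomy (u + 1) r with h | h | h
    · rw [if_pos h, if_pos (by omega)]
      exact hanti u (u + 1) (by omega) (by omega)
    · rw [if_neg (by omega), if_pos h, if_pos (by omega)]
      have := hs2 (by omega)
      have h1 : u = r - 1 := by omega
      rw [h1]
      omega
    · rcases Nat.lt_trichotomy u r with h' | h' | h'
      ·
        omega
      · rw [if_neg (by omega), if_neg (by omega), if_neg (by omega), if_pos h']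
        have hsimp : u + 1 - 1 = u := by omega
        rw [hsimp, h']
        have := hs1 (by omega)
        omega
      · rw [if_neg (by omega), if_neg (by omega), if_neg (by omega), if_neg (by omega)]
        have hsimp : u + 1 - 1 = u := by omega
        rw [hsimp]
        exact hanti (u - 1) u (by omega) (by omega)
  · -- the value recovers j
    rcases Nat.lt_or_ge r k with h | h
    · have := hs1 h
      omega
    · omega

section
variable (q : ℂ) (S : ℕ → Type) (d : ∀ n : ℕ, Fin (n + 2) → S (n + 1) → S n)
variable (hd : ∀ (n : ℕ) (i j : Fin (n + 2)), (j : ℕ) ≤ (i : ℕ) →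
      ∀ x : S (n + 2), d n i (d (n + 1) j.castSucc x) = d n j (d (n + 1) i.succ x))

lemma phiG_val {m k : ℕ} (f : Fin k → Fin (m + 2)) (jn : ℕ)
    (hb : ∀ u, u < k + 1 → insF (toN f) (rIdx k (toN f) jn) (jn - (k - rIdx k (toN f) jn)) u ≤ m + 1)
    (u : Fin (k + 1)) :
    ((phiG jn f) u : ℕ)
      = insF (toN f) (rIdx k (toN f) jn) (jn - (k - rIdx k (toN f) jn)) (u : ℕ) := by
  unfold phiG
  rw [dif_pos (by have := hb (u : ℕ) u.isLt; omega)]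

include hd in
lemma key_reindex (m k : ℕ) (x : S (m + k + 1)) :
    ∑ p ∈ (Finset.univ : Finset (Fin (m + k + 2))) ×ˢ
        (Finset.univ.filter (fun f : Fin k → Fin (m + 2) => ∀ t s : Fin k, t ≤ s → f s ≤ f t)),
      (q ^ (p.1 : ℕ) * q ^ (∑ t : Fin k, (p.2 t : ℕ))) •
        Finsupp.single (⟨m, dIter S d m k (toN p.2) (dNat S d (m + k) (p.1 : ℕ) x)⟩
          : Σ n : ℕ, S n) (1 : ℂ)
    = ∑ p ∈ (Finset.univ.filter
          (fun g : Fin (k + 1) → Fin (m + 2) => ∀ t s : Fin (k + 1), t ≤ s → g s ≤ g t)) ×ˢ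
        (Finset.univ : Finset (Fin (k + 1))),
      (q ^ (∑ t : Fin (k + 1), (p.1 t : ℕ)) * q ^ (k - (p.2 : ℕ))) •
        Finsupp.single (⟨m, dIter S d m (k + 1) (toN p.1) x⟩ : Σ n : ℕ, S n) (1 : ℂ) := by
  refine Finset.sum_nbij'
    (fun p => (phiG (p.1 : ℕ) p.2,
      (⟨rIdx k (toN p.2) (p.1 : ℕ), Nat.lt_succ_of_le (rIdx_le k (toN p.2) (p.1 : ℕ))⟩
        : Fin (k + 1))))
    (fun p => ((⟨(p.1 p.2 : ℕ) + (k - (p.2 : ℕ)),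
        by have := (p.1 p.2).isLt; have := p.2.isLt; omega⟩ : Fin (m + k + 2)), psiF p.1 p.2))
    ?_ ?_ ?_ ?_ ?_
  · -- maps into the target set
    rintro ⟨j, f⟩ hp
    simp only [Finset.mem_product, Finset.mem_filter, Finset.mem_univ, true_and, and_true]
      at hp ⊢
    obtain ⟨hb, ha, -⟩ := phi_facts f hp (j : ℕ) (by have := j.isLt; omega)
    intro t s hts
    rw [Fin.le_def, phiG_val f (j : ℕ) hb, phiG_val f (j : ℕ) hb]
    exact ha (t : ℕ) (s : ℕ) hts s.isLt
  · -- inverse maps into the source set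
    rintro ⟨g, r⟩ hp
    simp only [Finset.mem_product, Finset.mem_filter, Finset.mem_univ, true_and, and_true]
      at hp ⊢
    exact psiF_anti g hp r
  · -- left inverse
    rintro ⟨j, f⟩ hp
    simp only [Finset.mem_product, Finset.mem_filter, Finset.mem_univ, true_and, and_true]
      at hp
    obtain ⟨hb, ha, hval⟩ := phi_facts f hp (j : ℕ) (by have := j.isLt; omega)
    have hrle := rIdx_le k (toN f) (j : ℕ)
    refine Prod.ext ?_ ?_
    · apply Fin.ext
      show ((phiG (j : ℕ) f) ⟨rIdx k (toN f) (j : ℕ), _⟩ : ℕ) + (k - rIdx k (toN f) (j : ℕ))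
        = (j : ℕ)
      rw [phiG_val f (j : ℕ) hb]
      show insF (toN f) (rIdx k (toN f) (j : ℕ)) _ (rIdx k (toN f) (j : ℕ)) + _ = _
      unfold insF
      rw [if_neg (lt_irrefl _), if_pos rfl]
      exact hval
    · funext s
      show psiF (phiG (j : ℕ) f) _ s = f s
      unfold psiF
      by_cases hs : (s : ℕ) < rIdx k (toN f) (j : ℕ)
      · rw [if_pos hs]
        apply Fin.ext
        rw [phiG_val f (j : ℕ) hb]
        show insF (toN f) _ _ ((s : ℕ)) = _
        unfold insF
        rw [if_pos hs]
        unfold toN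
        rw [dif_pos s.isLt, Fin.eta]
      · rw [if_neg hs]
        apply Fin.ext
        rw [phiG_val f (j : ℕ) hb]
        show insF (toN f) _ _ ((s : ℕ) + 1) = _
        unfold insF
        rw [if_neg (by omega), if_neg (by omega)]
        unfold toN
        rw [show (s : ℕ) + 1 - 1 = (s : ℕ) by omega, dif_pos s.isLt, Fin.eta]
  · -- right inverse
    rintro ⟨g, r⟩ hp
    simp only [Finset.mem_product, Finset.mem_filter, Finset.mem_univ, true_and, and_true]
      at hp
    have hrk : (r : ℕ) < k + 1 := r.isLt
    have hre : rIdx k (toN (psiF g r)) ((g r : ℕ) + (k - (r : ℕ))) = (r : ℕ) := by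
      apply rIdx_eq
      · exact toN_anti (psiF g r) (psiF_anti g hp r)
      · omega
      · intro hrk'
        have h1 : toN (psiF g r) (r : ℕ) = (g ⟨(r : ℕ) + 1, by omega⟩ : ℕ) := by
          unfold toN
          rw [dif_pos hrk']
          unfold psiF
          rw [if_neg (lt_irrefl _)]
          rfl
        have h2 : (g ⟨(r : ℕ) + 1, by omega⟩ : ℕ) ≤ (g r : ℕ) :=
          hp r ⟨(r : ℕ) + 1, by omega⟩ (by rw [Fin.le_def]; exact Nat.le_succ _)
        rw [h1]
        omega
      · intro hr0
        have h1 : toN (psiF g r) ((r : ℕ) - 1) = (g ⟨(r : ℕ) - 1, by omega⟩ : ℕ) := by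
          unfold toN
          rw [dif_pos (by omega : (r : ℕ) - 1 < k)]
          unfold psiF
          rw [if_pos (by show (r : ℕ) - 1 < (r : ℕ); omega)]
          exact congrArg (fun z => ((g z : Fin (m + 2)) : ℕ)) (Fin.ext rfl)
        have h2 : (g r : ℕ) ≤ (g ⟨(r : ℕ) - 1, by omega⟩ : ℕ) :=
          hp ⟨(r : ℕ) - 1, by omega⟩ r (by rw [Fin.le_def]; exact Nat.sub_le _ _)
        rw [h1]
        omega
    refine Prod.ext ?_ ?_
    · show phiG ((g r : ℕ) + (k - (r : ℕ))) (psiF g r) = g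
      funext u
      have hins : insF (toN (psiF g r)) (rIdx k (toN (psiF g r)) ((g r : ℕ) + (k - (r : ℕ))))
          (((g r : ℕ) + (k - (r : ℕ))) - (k - rIdx k (toN (psiF g r)) ((g r : ℕ) + (k - (r : ℕ)))))
          (u : ℕ) = (g u : ℕ) := by
        rw [hre]
        rw [show ((g r : ℕ) + (k - (r : ℕ))) - (k - (r : ℕ)) = (g r : ℕ) by omega]
        unfold insF
        rcases Nat.lt_trichotomy (u : ℕ) (r : ℕ) with h | h | h
        · rw [if_pos h]
          unfold toN
          rw [dif_pos (by omega : (u : ℕ) < k)]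
          unfold psiF
          rw [if_pos (by show (u : ℕ) < (r : ℕ); exact h)]
          exact congrArg (fun z => ((g z : Fin (m + 2)) : ℕ)) (Fin.ext rfl)
        · rw [if_neg (by omega), if_pos h]
          have : u = r := Fin.ext h
          rw [this]
        · rw [if_neg (by omega), if_neg (by omega)]
          unfold toN
          rw [dif_pos (by have := u.isLt; omega : (u : ℕ) - 1 < k)]
          unfold psiF
          rw [if_neg (by show ¬((u : ℕ) - 1 < (r : ℕ)); omega)]
          exact congrArg (fun z => ((g z : Fin (m + 2)) : ℕ))
            (Fin.ext (by show (u : ℕ) - 1 + 1 = (u : ℕ); omega))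
      unfold phiG
      rw [hins, dif_pos (g u).isLt]
    · apply Fin.ext
      exact hre
  · -- values agree
    rintro ⟨j, f⟩ hp
    simp only [Finset.mem_product, Finset.mem_filter, Finset.mem_univ, true_and, and_true]
      at hp
    obtain ⟨hb, ha, hval⟩ := phi_facts f hp (j : ℕ) (by have := j.isLt; omega)
    have hrle := rIdx_le k (toN f) (j : ℕ)
    have hiter : dIter S d m k (toN f) (dNat S d (m + k) (j : ℕ) x)
        = dIter S d m (k + 1) (toN (phiG (j : ℕ) f)) x := by
      rw [dIter_swap S d hd m k (toN f) (j : ℕ) x (toN_anti f hp) (toN_lt f)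
        (by have := j.isLt; omega)]
      apply dIter_congr
      intro u hu
      rw [show (toN (phiG (j : ℕ) f)) u = ((phiG (j : ℕ) f) ⟨u, hu⟩ : ℕ) by
        unfold toN; rw [dif_pos hu]]
      rw [phiG_val f (j : ℕ) hb]
    have hsum1 : ∑ t : Fin (k + 1), ((phiG (j : ℕ) f) t : ℕ)
        = ((j : ℕ) - (k - rIdx k (toN f) (j : ℕ))) + ∑ u ∈ Finset.range k, toN f u := by
      rw [Finset.sum_congr rfl (fun t _ => phiG_val f (j : ℕ) hb t)]
      rw [Fin.sum_univ_eq_sum_range]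
      exact insF_sum (toN f) _ k _ hrle
    have hsum2 : ∑ t : Fin k, (f t : ℕ) = ∑ u ∈ Finset.range k, toN f u := by
      rw [← Fin.sum_univ_eq_sum_range]
      apply Finset.sum_congr rfl
      intro t _
      unfold toN
      rw [dif_pos t.isLt, Fin.eta]
    have hexp : (j : ℕ) + (∑ t : Fin k, (f t : ℕ))
        = (∑ t : Fin (k + 1), ((phiG (j : ℕ) f) t : ℕ)) + (k - rIdx k (toN f) (j : ℕ)) := by
      rw [hsum1, hsum2]
      omega
    rw [hiter]
    show _ = (q ^ (∑ t : Fin (k + 1), ((phiG (j : ℕ) f) t : ℕ))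
        * q ^ (k - rIdx k (toN f) (j : ℕ))) • _
    rw [← pow_add, ← pow_add, hexp]

end

section
variable (q : ℂ) (S : ℕ → Type) (d : ∀ n : ℕ, Fin (n + 2) → S (n + 1) → S n)
variable (hd : ∀ (n : ℕ) (i j : Fin (n + 2)), (j : ℕ) ≤ (i : ℕ) →
      ∀ x : S (n + 2), d n i (d (n + 1) j.castSucc x) = d n j (d (n + 1) i.succ x))

lemma qBorderS_single (n : ℕ) (x : S (n + 1)) :
    qBorderS q S d (Finsupp.single ⟨n + 1, x⟩ (1 : ℂ)) =
      ∑ i : Fin (n + 2), q ^ (i : ℕ) • Finsupp.single (⟨n, d n i x⟩ : Σ n : ℕ, S n) (1 : ℂ) := by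
  rw [qBorderS, Finsupp.lsum_single]
  simp only [LinearMap.coe_sum, Finset.sum_apply, LinearMap.smul_apply, Finsupp.lsingle_apply]

include hd in
lemma main_rule : ∀ (k m : ℕ) (x : S (m + k)),
    (qBorderS q S d ^ k) (Finsupp.single ⟨m + k, x⟩ 1) =
      qFac q k • ∑ f ∈ Finset.univ.filter
            (fun f : Fin k → Fin (m + 2) => ∀ t s : Fin k, t ≤ s → f s ≤ f t),
          q ^ (∑ t : Fin k, (f t : ℕ)) •
            Finsupp.single (⟨m, dIter S d m k (toN f) x⟩ : Σ n : ℕ, S n) (1 : ℂ) := by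
  intro k
  induction k with
  | zero =>
    intro m x
    rw [pow_zero, Module.End.one_apply]
    rw [Finset.filter_true_of_mem (fun f _ => fun t => t.elim0)]
    rw [Finset.univ_unique, Finset.sum_singleton]
    simp [qFac, dIter]
  | succ k ih =>
    intro m x
    have hstep : (qBorderS q S d ^ (k + 1)) (Finsupp.single ⟨m + (k + 1), x⟩ (1 : ℂ))
        = (qBorderS q S d ^ k) ((qBorderS q S d) (Finsupp.single ⟨m + k + 1, x⟩ 1)) := by
      rw [pow_succ, Module.End.mul_apply]
      rfl
    rw [hstep, qBorderS_single q S d (m + k) x, map_sum]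
    have hterm : ∀ i : Fin (m + k + 2),
        (qBorderS q S d ^ k) (q ^ (i : ℕ) • Finsupp.single ⟨m + k, d (m + k) i x⟩ (1 : ℂ))
          = qFac q k • ∑ f ∈ Finset.univ.filter
                (fun f : Fin k → Fin (m + 2) => ∀ t s : Fin k, t ≤ s → f s ≤ f t),
              (q ^ (i : ℕ) * q ^ (∑ t : Fin k, (f t : ℕ))) •
                Finsupp.single (⟨m, dIter S d m k (toN f) (dNat S d (m + k) (i : ℕ) x)⟩
                  : Σ n : ℕ, S n) (1 : ℂ) := by
      intro i
      rw [map_smul, ih m (d (m + k) i x)]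
      rw [show d (m + k) i x = dNat S d (m + k) (i : ℕ) x by
        unfold dNat; rw [dif_pos i.isLt, Fin.eta]]
      rw [smul_comm (q ^ (i : ℕ)) (qFac q k)]
      congr 1
      rw [Finset.smul_sum]
      apply Finset.sum_congr rfl
      intro f _
      rw [smul_smul]
    rw [Finset.sum_congr rfl (fun i _ => hterm i), ← Finset.smul_sum]
    have e1 := Finset.sum_product' (s := (Finset.univ : Finset (Fin (m + k + 2))))
      (t := Finset.univ.filter
        (fun f : Fin k → Fin (m + 2) => ∀ t s : Fin k, t ≤ s → f s ≤ f t))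
      (f := fun (i : Fin (m + k + 2)) (f : Fin k → Fin (m + 2)) =>
        (q ^ (i : ℕ) * q ^ (∑ t : Fin k, (f t : ℕ))) •
          Finsupp.single (⟨m, dIter S d m k (toN f) (dNat S d (m + k) (i : ℕ) x)⟩
            : Σ n : ℕ, S n) (1 : ℂ))
    rw [← e1, key_reindex q S d hd m k x]
    have e2 := Finset.sum_product' (s := Finset.univ.filter
        (fun g : Fin (k + 1) → Fin (m + 2) => ∀ t s : Fin (k + 1), t ≤ s → g s ≤ g t))
      (t := (Finset.univ : Finset (Fin (k + 1))))
      (f := fun (g : Fin (k + 1) → Fin (m + 2)) (r : Fin (k + 1)) =>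
        (q ^ (∑ t : Fin (k + 1), (g t : ℕ)) * q ^ (k - (r : ℕ))) •
          Finsupp.single (⟨m, dIter S d m (k + 1) (toN g) x⟩ : Σ n : ℕ, S n) (1 : ℂ))
    rw [e2]
    have hqint : ∑ r : Fin (k + 1), q ^ (k - (r : ℕ)) = qInt q (k + 1) := by
      rw [Fin.sum_univ_eq_sum_range (fun u => q ^ (k - u)) (k + 1)]
      unfold qInt
      calc ∑ u ∈ Finset.range (k + 1), q ^ (k - u)
          = ∑ u ∈ Finset.range (k + 1), q ^ (k + 1 - 1 - u) := by
            apply Finset.sum_congr rfl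
            intro u hu
            congr 1
        _ = ∑ u ∈ Finset.range (k + 1), q ^ u := Finset.sum_range_reflect (fun i => q ^ i) (k + 1)
    have hInt : ∀ (c : ℂ) (T : ChainsS S),
        (∑ r : Fin (k + 1), (c * q ^ (k - (r : ℕ))) • T) = (c * qInt q (k + 1)) • T := by
      intro c T
      rw [← Finset.sum_smul, ← Finset.mul_sum, hqint]
    rw [Finset.sum_congr rfl (fun g _ => hInt _ _)]
    have hq1 : qFac q (k + 1) = qFac q k * qInt q (k + 1) := by
      unfold qFac; rw [Finset.prod_range_succ]
    rw [hq1, mul_smul]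
    congr 1
    rw [Finset.smul_sum]
    apply Finset.sum_congr rfl
    intro g _
    rw [smul_smul, mul_comm]

end

end QAux

theorem qBorder_iteration_rule (N : ℕ) (hN : 2 ≤ N) (q : ℂ) (hq : IsPrimitiveRoot q N)
    (S : ℕ → Type) (d : ∀ n : ℕ, Fin (n + 2) → S (n + 1) → S n)
    (hd : ∀ (n : ℕ) (i j : Fin (n + 2)), (j : ℕ) ≤ (i : ℕ) →
      ∀ x : S (n + 2), d n i (d (n + 1) j.castSucc x) = d n j (d (n + 1) i.succ x))
    (m k : ℕ) (hk : k ≤ N) (x : S (m + k)) :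
    (qBorderS q S d ^ k) (Finsupp.single ⟨m + k, x⟩ 1) =
      qFac q k •
        ∑ f ∈ Finset.univ.filter
            (fun f : Fin k → Fin (m + 2) => ∀ t s : Fin k, t ≤ s → f s ≤ f t),
          q ^ (∑ t : Fin k, (f t : ℕ)) •
            Finsupp.single (⟨m, dIter S d m k (fun t => if h : t < k then (f ⟨t, h⟩ : ℕ) else 0) x⟩
              : Σ n : ℕ, S n) (1 : ℂ) :=
  QAux.main_rule q S d hd k m x
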